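/- Let ω : 𝔻 → 𝔻 be analytic. Then for |z| = r with √2 − 1 ≤ r < 1 and r satisfying e^r(1+r²)² < 4(1−r²), we have |z ω'(z) / e^{ω(z)}| < 1. In particular this holds for all √2−1 ≤ r < r₁ where r₁ ≈ 0.537561 is the smallest positive root of e^r(1+r²)² − 4(1−r²) = 0. -/

import Mathlib

open Metric Complex

noncomputable def mob (a w : ℂ) : ℂ := (w + a) / (1 + (starRingEnd ℂ) a * w)

lemma normSq_mob_identity (u v : ℂ) :
    Complex.normSq (1 + (starRingEnd ℂ) u * v) - Complex.normSq (v + u) =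
      (1 - Complex.normSq u) * (1 - Complex.normSq v) := by
  simp [Complex.normSq_apply, Complex.add_re, Complex.add_im, Complex.mul_re, Complex.mul_im]
  ring

lemma mob_den_ne {a w : ℂ} (ha : ‖a‖ < 1) (hw : ‖w‖ < 1) :
    1 + (starRingEnd ℂ) a * w ≠ 0 := by
  intro h
  have h1 : (starRingEnd ℂ) a * w = -1 := by linear_combination h
  have : ‖(starRingEnd ℂ) a * w‖ = 1 := by rw [h1]; simp
  rw [norm_mul, RCLike.norm_conj] at this
  nlinarith [norm_nonneg a, norm_nonneg w]

lemma mob_maps {a : ℂ} (ha : ‖a‖ < 1) :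
    Set.MapsTo (mob a) (ball (0:ℂ) 1) (ball (0:ℂ) 1) := by
  intro w hw
  rw [mem_ball_zero_iff] at hw ⊢
  have hden := mob_den_ne ha hw
  rw [mob, norm_div, div_lt_one (norm_pos_iff.mpr hden)]
  have hkey := normSq_mob_identity a w
  have h1 : Complex.normSq a < 1 := by
    rw [← Complex.sq_norm]; nlinarith [norm_nonneg a]
  have h2 : Complex.normSq w < 1 := by
    rw [← Complex.sq_norm]; nlinarith [norm_nonneg w]
  have : Complex.normSq (w + a) < Complex.normSq (1 + (starRingEnd ℂ) a * w) := by nlinarith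
  have := (Real.sqrt_lt_sqrt (Complex.normSq_nonneg _) this)
  simpa [Complex.normSq_eq_norm_sq] using this

lemma mob_diff {a : ℂ} (ha : ‖a‖ < 1) :
    DifferentiableOn ℂ (mob a) (ball (0:ℂ) 1) := by
  apply DifferentiableOn.div
  · exact (differentiable_id.add_const a).differentiableOn
  · exact ((differentiable_id.const_mul _).const_add 1).differentiableOn
  · intro w hw
    exact mob_den_ne ha (mem_ball_zero_iff.mp hw)

lemma mob_zero (a : ℂ) : mob a 0 = a := by simp [mob]

lemma mob_hasDerivAt (a p : ℂ) (h : 1 + (starRingEnd ℂ) a * p ≠ 0) :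
    HasDerivAt (mob a)
      ((1 - (Complex.normSq a : ℂ)) / (1 + (starRingEnd ℂ) a * p) ^ 2) p := by
  have h1 : HasDerivAt (fun w : ℂ => w + a) 1 p := (hasDerivAt_id p).add_const a
  have h2 : HasDerivAt (fun w : ℂ => 1 + (starRingEnd ℂ) a * w) ((starRingEnd ℂ) a) p := by
    simpa using ((hasDerivAt_id p).const_mul ((starRingEnd ℂ) a)).const_add 1
  have := h1.div h2 h
  have hc : a * (starRingEnd ℂ) a = (Complex.normSq a : ℂ) := Complex.mul_conj a
  exact this.congr_deriv (by rw [← hc]; ring)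

/-- Schwarz–Pick derivative inequality, open version. -/
lemma schwarz_pick {f : ℂ → ℂ} (hd : DifferentiableOn ℂ f (ball (0:ℂ) 1))
    (hm : Set.MapsTo f (ball (0:ℂ) 1) (ball (0:ℂ) 1)) {z : ℂ} (hz : z ∈ ball (0:ℂ) 1) :
    ‖deriv f z‖ * (1 - ‖z‖ ^ 2) ≤ 1 - ‖f z‖ ^ 2 := by
  set b := f z with hb
  have hz1 : ‖z‖ < 1 := mem_ball_zero_iff.mp hz
  have hb1 : ‖b‖ < 1 := mem_ball_zero_iff.mp (hm hz)
  have hnb1 : ‖-b‖ < 1 := by simpa using hb1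
  -- the composed map
  set h : ℂ → ℂ := mob (-b) ∘ f ∘ mob z with hh
  have hmaps : Set.MapsTo h (ball (0:ℂ) 1) (ball (0:ℂ) 1) :=
    (mob_maps hnb1).comp (hm.comp (mob_maps hz1))
  have hdiff : DifferentiableOn ℂ h (ball (0:ℂ) 1) :=
    ((mob_diff hnb1).comp (hd.comp (mob_diff hz1) (mob_maps hz1))
      (hm.comp (mob_maps hz1)))
  have hb0 : mob (-b) b = 0 := by
    simp [mob, sub_eq_zero]
  have h00 : h 0 = 0 := by
    simp [hh, Function.comp, mob_zero]; exact hb0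
  -- derivative of h at 0
  have H1 : HasDerivAt (mob z) ((1 - (Complex.normSq z : ℂ)) / (1 + (starRingEnd ℂ) z * 0) ^ 2) 0 :=
    mob_hasDerivAt z 0 (by simp)
  have H1' : HasDerivAt (mob z) (1 - (Complex.normSq z : ℂ)) 0 := by
    simpa using H1
  have hfz : DifferentiableAt ℂ f z := hd.differentiableAt (isOpen_ball.mem_nhds hz)
  have H2 : HasDerivAt f (deriv f z) (mob z 0) := by
    rw [mob_zero]; exact hfz.hasDerivAt
  have hden3 : 1 + (starRingEnd ℂ) (-b) * b ≠ 0 := by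
    intro hcon
    have : (1:ℂ) - (Complex.normSq b : ℂ) = 0 := by
      have := Complex.mul_conj b
      rw [map_neg] at hcon
      linear_combination hcon + this
    have h2 := congrArg Complex.re this
    simp [Complex.sub_re, Complex.ofReal_re] at h2
    have hb1' : ‖b‖ < 1 := hb1
    nlinarith [Complex.sq_norm b, norm_nonneg b]
  have H3 : HasDerivAt (mob (-b))
      ((1 - (Complex.normSq (-b) : ℂ)) / (1 + (starRingEnd ℂ) (-b) * b) ^ 2) b :=
    mob_hasDerivAt (-b) b hden3
  have H3' : HasDerivAt (mob (-b)) ((1 - (Complex.normSq b : ℂ))⁻¹) b := by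
    have hcb : (starRingEnd ℂ) (-b) * b = -(Complex.normSq b : ℂ) := by
      rw [map_neg]
      have := Complex.mul_conj b
      linear_combination -this
    have hne : (1:ℂ) - (Complex.normSq b : ℂ) ≠ 0 := by
      intro hcon
      apply hden3
      rw [hcb]
      linear_combination hcon
    have heq : (1 - (Complex.normSq (-b) : ℂ)) / (1 + (starRingEnd ℂ) (-b) * b) ^ 2
        = (1 - (Complex.normSq b : ℂ))⁻¹ := by
      rw [Complex.normSq_neg, hcb]
      have h3 : (1 : ℂ) + -(Complex.normSq b : ℂ) = 1 - (Complex.normSq b : ℂ) := by ring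
      rw [h3]
      field_simp
    exact heq ▸ H3
  -- chain rule
  have H2' : HasDerivAt (f ∘ mob z) (deriv f z * (1 - (Complex.normSq z : ℂ))) 0 :=
    H2.comp 0 H1'
  have H3b : HasDerivAt (mob (-b)) ((1 - (Complex.normSq b : ℂ))⁻¹) ((f ∘ mob z) 0) := by
    have : (f ∘ mob z) 0 = b := by simp [Function.comp, mob_zero, hb]
    rw [this]; exact H3'
  have HH : HasDerivAt h
      ((1 - (Complex.normSq b : ℂ))⁻¹ * (deriv f z * (1 - (Complex.normSq z : ℂ)))) 0 :=
    H3b.comp 0 H2'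
  -- Schwarz lemma at 0
  have hsch : ‖deriv h 0‖ ≤ 1 := by
    have := Complex.norm_deriv_le_div_of_mapsTo_ball hdiff (R₂ := 1) (by rw [h00]; exact hmaps.mono_right ball_subset_closedBall) one_pos
    simpa using this
  rw [HH.deriv] at hsch
  -- unfold the norms
  have hsb : Complex.normSq b < 1 := by
    have hb1' : ‖b‖ < 1 := hb1
    nlinarith [Complex.sq_norm b, norm_nonneg b]
  have hsz : Complex.normSq z < 1 := by
    have hz1' : ‖z‖ < 1 := hz1
    nlinarith [Complex.sq_norm z, norm_nonneg z]
  have e1 : ‖(1 - (Complex.normSq b : ℂ))⁻¹‖ = (1 - Complex.normSq b)⁻¹ := by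
    rw [norm_inv]
    congr 1
    rw [show (1 : ℂ) - (Complex.normSq b : ℂ) = ((1 - Complex.normSq b : ℝ) : ℂ) by push_cast; ring]
    rw [Complex.norm_real, Real.norm_of_nonneg (by linarith)]
  have e2 : ‖(1 : ℂ) - (Complex.normSq z : ℂ)‖ = 1 - Complex.normSq z := by
    rw [show (1 : ℂ) - (Complex.normSq z : ℂ) = ((1 - Complex.normSq z : ℝ) : ℂ) by push_cast; ring]
    rw [Complex.norm_real, Real.norm_of_nonneg (by linarith)]
  rw [norm_mul, norm_mul, e1, e2] at hsch
  have hzsq : Complex.normSq z = ‖z‖ ^ 2 := by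
    rw [Complex.sq_norm]
  have hbsq : Complex.normSq b = ‖b‖ ^ 2 := by
    rw [Complex.sq_norm]
  rw [hzsq, hbsq] at hsch
  rw [hbsq] at hsb
  rw [hzsq] at hsz
  rw [inv_mul_le_iff₀ (by linarith), mul_one] at hsch
  exact hsch

/-- Schwarz–Pick derivative inequality, closed version (via the maximum principle). -/
lemma schwarz_pick_closed {f : ℂ → ℂ} (hd : DifferentiableOn ℂ f (ball (0:ℂ) 1))
    (hm : ∀ w ∈ ball (0:ℂ) 1, ‖f w‖ ≤ 1) {z : ℂ} (hz : z ∈ ball (0:ℂ) 1) :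
    ‖deriv f z‖ * (1 - ‖z‖ ^ 2) ≤ 1 - ‖f z‖ ^ 2 := by
  by_cases hopen : ∀ w ∈ ball (0:ℂ) 1, ‖f w‖ < 1
  · exact schwarz_pick hd (fun w hw => mem_ball_zero_iff.mpr (hopen w hw)) hz
  · push_neg at hopen
    obtain ⟨w₀, hw₀, hge⟩ := hopen
    have h1 : ‖f w₀‖ = 1 := le_antisymm (hm w₀ hw₀) hge
    have hmax : IsMaxOn (norm ∘ f) (ball (0:ℂ) 1) w₀ := by
      intro w hw
      simp only [Function.comp, Set.mem_setOf_eq, h1]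
      exact hm w hw
    have heq := Complex.eqOn_of_isPreconnected_of_isMaxOn_norm
      (convex_ball (0:ℂ) 1).isPreconnected isOpen_ball hd hw₀ hmax
    have hev : ∀ᶠ w in nhds z, f w = f w₀ := by
      filter_upwards [isOpen_ball.mem_nhds hz] with w hw using heq hw
    have hdz : deriv f z = 0 := by
      rw [Filter.EventuallyEq.deriv_eq hev, deriv_const]
    have hfz : ‖f z‖ = 1 := by rw [heq hz]; exact h1
    rw [hdz, hfz]
    simp

/-- The main pointwise estimate. -/
lemma main_est (ω : ℂ → ℂ)
    (hd : DifferentiableOn ℂ ω (ball (0:ℂ) 1))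
    (hmap : ∀ z ∈ ball (0:ℂ) 1, ω z ∈ ball (0:ℂ) 1)
    (h0 : ω 0 = 0) {z : ℂ} (hz1 : ‖z‖ < 1) (hz2 : Real.sqrt 2 - 1 ≤ ‖z‖)
    (hz3 : Real.exp ‖z‖ * (1 + ‖z‖ ^ 2) ^ 2 < 4 * (1 - ‖z‖ ^ 2)) :
    ‖z * deriv ω z / Complex.exp (ω z)‖ < 1 := by
  have hs2 : (1:ℝ) < Real.sqrt 2 := by
    nlinarith [Real.sq_sqrt (by norm_num : (0:ℝ) ≤ 2), Real.sqrt_nonneg 2]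
  have hr0 : 0 < ‖z‖ := lt_of_lt_of_le (by linarith) hz2
  have hzball : z ∈ ball (0:ℂ) 1 := mem_ball_zero_iff.mpr hz1
  set g : ℂ → ℂ := dslope ω 0 with hg
  have hmap' : Set.MapsTo ω (ball (0:ℂ) 1) (ball (ω 0) 1) := by
    rw [h0]; intro w hw; exact hmap w hw
  have hgd : DifferentiableOn ℂ g (ball (0:ℂ) 1) :=
    (Complex.differentiableOn_dslope (ball_mem_nhds 0 one_pos)).mpr hd
  have hg1 : ∀ w ∈ ball (0:ℂ) 1, ‖g w‖ ≤ 1 := fun w hw => by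
    simpa using Complex.norm_dslope_le_div_of_mapsTo_ball hd (hmap'.mono_right ball_subset_closedBall) hw
  have homega : ∀ w : ℂ, ω w = w * g w := by
    intro w
    rcases eq_or_ne w 0 with rfl | hw
    · simp [h0]
    · rw [hg, dslope_of_ne ω hw, slope_def_field, h0]
      field_simp
      ring
  have hgz : DifferentiableAt ℂ g z := hgd.differentiableAt (isOpen_ball.mem_nhds hzball)
  have hder : deriv ω z = g z + z * deriv g z := by
    have h1 : HasDerivAt (fun w => w * g w) (1 * g z + z * deriv g z) z :=
      (hasDerivAt_id z).mul hgz.hasDerivAt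
    rw [funext homega, h1.deriv]; ring
  have hSP : ‖deriv g z‖ * (1 - ‖z‖ ^ 2) ≤ 1 - ‖g z‖ ^ 2 := schwarz_pick_closed hgd hg1 hzball
  set r := ‖z‖
  set t := ‖g z‖
  set s := ‖deriv g z‖
  have ht1 : t ≤ 1 := hg1 z hzball
  have ht0 : 0 ≤ t := norm_nonneg _
  have hs0 : 0 ≤ s := norm_nonneg _
  have hωd : ‖deriv ω z‖ ≤ t + r * s := by
    rw [hder]
    exact (norm_add_le _ _).trans (by rw [norm_mul])
  have hωz : ‖ω z‖ ≤ r := by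
    rw [homega z, norm_mul]
    calc r * t ≤ r * 1 := by nlinarith
    _ = r := mul_one r
  have hre : -r ≤ (ω z).re := by
    have h2 : |(ω z).re| ≤ r :=
      le_trans (Complex.abs_re_le_norm (ω z))
        (le_trans le_rfl hωz)
    linarith [abs_le.mp h2]
  have hexp : Real.exp (-r) ≤ ‖Complex.exp (ω z)‖ := by
    rw [Complex.norm_exp]
    exact Real.exp_le_exp.mpr hre
  have hepos : 0 < ‖Complex.exp (ω z)‖ := lt_of_lt_of_le (Real.exp_pos _) hexp
  have hE : 0 < Real.exp r := Real.exp_pos r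
  have h4 : 4 * (1 - r ^ 2) * (r * t + r ^ 2 * s) ≤ (1 + r ^ 2) ^ 2 := by
    nlinarith [sq_nonneg (1 - r^2 - 2*r*t),
      mul_le_mul_of_nonneg_left hSP (by positivity : (0:ℝ) ≤ 4 * r ^ 2)]
  have key : r * ‖deriv ω z‖ * Real.exp r < 1 := by
    have h5 : r * ‖deriv ω z‖ ≤ r * t + r ^ 2 * s := by nlinarith [hωd, hr0.le]
    have h6 : 0 < 1 - r ^ 2 := by nlinarith [hE, sq_nonneg (1 + r^2), sq_nonneg r]
    nlinarith [mul_le_mul_of_nonneg_right h5 hE.le,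
      mul_le_mul_of_nonneg_right h4 hE.le, norm_nonneg (deriv ω z)]
  rw [norm_div, norm_mul, div_lt_one hepos]
  calc r * ‖deriv ω z‖ < Real.exp (-r) := by
        rw [Real.exp_neg, ← one_div]
        exact (lt_div_iff₀ hE).mpr key
  _ ≤ ‖Complex.exp (ω z)‖ := hexp

/-- For a holomorphic self-map ω of the disk with ω(0) = 0, the quantity
|zω'(z)/e^{ω(z)}| is less than 1 on circles |z| = r with √2 − 1 ≤ r satisfying
e^r(1+r²)² < 4(1−r²); in particular for √2 − 1 ≤ r < r₁ where r₁ is the smallest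
positive root of e^r(1+r²)² = 4(1−r²). -/
theorem exp_subord_radius (ω : ℂ → ℂ)
    (hd : DifferentiableOn ℂ ω (ball (0:ℂ) 1))
    (hmap : ∀ z ∈ ball (0:ℂ) 1, ω z ∈ ball (0:ℂ) 1)
    (h0 : ω 0 = 0) :
    (∀ z : ℂ, ‖z‖ < 1 → Real.sqrt 2 - 1 ≤ ‖z‖ →
        Real.exp ‖z‖ * (1 + ‖z‖ ^ 2) ^ 2 < 4 * (1 - ‖z‖ ^ 2) →
        ‖z * deriv ω z / Complex.exp (ω z)‖ < 1) ∧
    ∀ r₁ : ℝ, 0 < r₁ →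
      Real.exp r₁ * (1 + r₁ ^ 2) ^ 2 = 4 * (1 - r₁ ^ 2) →
      (∀ r : ℝ, 0 < r → Real.exp r * (1 + r ^ 2) ^ 2 = 4 * (1 - r ^ 2) → r₁ ≤ r) →
      ∀ z : ℂ, Real.sqrt 2 - 1 ≤ ‖z‖ → ‖z‖ < r₁ →
        ‖z * deriv ω z / Complex.exp (ω z)‖ < 1 := by
  constructor
  · intro z hz1 hz2 hz3
    exact main_est ω hd hmap h0 hz1 hz2 hz3
  · intro r₁ hr₁ hroot hmin z hz2 hz3
    have hpos : 0 < Real.exp r₁ * (1 + r₁ ^ 2) ^ 2 := by positivity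
    have h1r : 0 < 1 - r₁ ^ 2 := by nlinarith
    have hr₁1 : r₁ < 1 := by nlinarith
    have hz1 : ‖z‖ < 1 := hz3.trans hr₁1
    apply main_est ω hd hmap h0 hz1 hz2
    by_contra hcon
    push_neg at hcon
    set F : ℝ → ℝ := fun x => Real.exp x * (1 + x ^ 2) ^ 2 - 4 * (1 - x ^ 2) with hF
    have hcont : ContinuousOn F (Set.Icc 0 ‖z‖) := by
      apply Continuous.continuousOn
      continuity
    have h0f : F 0 = -3 := by simp [hF]; norm_num
    have hmem : (0:ℝ) ∈ Set.Icc (F 0) (F ‖z‖) := by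
      constructor
      · rw [h0f]; norm_num
      · simp only [hF]; linarith
    obtain ⟨c, hc1, hc2⟩ := intermediate_value_Icc (norm_nonneg z) hcont hmem
    have hcpos : 0 < c := by
      rcases lt_or_eq_of_le hc1.1 with h | h
      · exact h
      · exfalso; rw [← h, h0f] at hc2; norm_num at hc2
    have hceq : Real.exp c * (1 + c ^ 2) ^ 2 = 4 * (1 - c ^ 2) := by
      have : Real.exp c * (1 + c ^ 2) ^ 2 - 4 * (1 - c ^ 2) = 0 := hc2
      linarith
    have := hmin c hcpos hceq
    linarith [hc1.2]
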